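/- arXiv:1801.03134 — 5 statements merged into one kernel-verified Lean document; each statement's English description precedes it below -/
import Mathlib

section
/- Define γ⁺(n,i) as the number of divisors k of 2n with k(k + 2i + (-1)^(n+k+i))/2 = n, and γ⁻(n,i) as the number of divisors k of 2n with k(k + 2i - (-1)^(n+k+i))/2 = n. Then for every positive integer n and every i with 0 ≤ i ≤ n, γ⁺(n,i) · γ⁻(n,i) = 0. -/
/-- Number of positive divisors `k` of `2n` with `k(k + 2i + (-1)^(n+k+i))/2 = n`. -/
def gammaPlus (n i : ℕ) : ℕ :=
  ((2 * n).divisors.filter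
    (fun k : ℕ => (k : ℤ) * ((k : ℤ) + 2 * i + (-1 : ℤ) ^ ((n + k + i : ℕ))) = 2 * n)).card

/-- Number of positive divisors `k` of `2n` with `k(k + 2i - (-1)^(n+k+i))/2 = n`. -/
def gammaMinus (n i : ℕ) : ℕ :=
  ((2 * n).divisors.filter
    (fun k : ℕ => (k : ℤ) * ((k : ℤ) + 2 * i - (-1 : ℤ) ^ ((n + k + i : ℕ))) = 2 * n)).card

/-- Number of positive divisors of `n` congruent to `a` mod 4. -/
def d4 (a n : ℕ) : ℕ := (n.divisors.filter (fun d => d % 4 = a)).card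

theorem stmt5 (n i : ℕ) (hn : 0 < n) (hi : i ≤ n) :
    gammaPlus n i * gammaMinus n i = 0 := by
  by_contra h
  rw [Nat.mul_eq_zero] at h
  push_neg at h
  obtain ⟨h1, h2⟩ := h
  unfold gammaPlus at h1
  unfold gammaMinus at h2
  obtain ⟨k, hk⟩ := Finset.card_ne_zero.mp h1
  obtain ⟨m, hm⟩ := Finset.card_ne_zero.mp h2
  rw [Finset.mem_filter] at hk hm
  have hk1 : 1 ≤ k := Nat.pos_of_mem_divisors hk.1
  have hm1 : 1 ≤ m := Nat.pos_of_mem_divisors hm.1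
  set e1 : ℤ := (-1 : ℤ) ^ (n + k + i) with he1def
  set e2 : ℤ := (-1 : ℤ) ^ (n + m + i) with he2def
  have hke : (k : ℤ) * ((k : ℤ) + 2 * i + e1) = 2 * n := hk.2
  have hme : (m : ℤ) * ((m : ℤ) + 2 * i - e2) = 2 * n := hm.2
  have he1 : e1 = 1 ∨ e1 = -1 := by
    rcases Nat.even_or_odd (n + k + i) with h | h
    · left; rw [he1def, h.neg_one_pow]
    · right; rw [he1def, h.neg_one_pow]
  have he2 : e2 = 1 ∨ e2 = -1 := by
    rcases Nat.even_or_odd (n + m + i) with h | h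
    · left; rw [he2def, h.neg_one_pow]
    · right; rw [he2def, h.neg_one_pow]
  have hpar : e1 * e2 = (-1 : ℤ) ^ (k + m) := by
    rw [he1def, he2def, ← pow_add]
    have : (n + k + i) + (n + m + i) = 2 * (n + i) + (k + m) := by ring
    rw [this, pow_add, pow_mul, neg_one_sq, one_pow, one_mul]
  have hk1' : (1 : ℤ) ≤ (k : ℤ) := by exact_mod_cast hk1
  have hm1' : (1 : ℤ) ≤ (m : ℤ) := by exact_mod_cast hm1
  have hi0 : (0 : ℤ) ≤ (i : ℤ) := Int.natCast_nonneg i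
  by_cases hcase : e1 = -e2
  · -- same equation; unique positive root forces k = m, then parity contradiction
    have heq : ((k : ℤ) - m) * ((k : ℤ) + m + 2 * i + e1) = 0 := by
      have h' : (m : ℤ) * ((m : ℤ) + 2 * i + e1) = 2 * n := by
        rw [hcase]; linarith [hme]
      nlinarith [hke, h']
    have hpos : (0 : ℤ) < (k : ℤ) + m + 2 * i + e1 := by
      rcases he1 with h | h <;> rw [h] <;> linarith
    have hkm : (k : ℤ) = m := by
      rcases mul_eq_zero.mp heq with h | h
      · linarith
      · linarith
    have hkmn : k = m := by exact_mod_cast hkm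
    subst hkmn
    have hsame : e1 = e2 := by rw [he1def, he2def]
    rcases he2 with h | h <;> rw [h] at hcase hsame <;> linarith
  · -- e1 = e2 =: ε
    have hee : e1 = e2 := by
      rcases he1 with h | h <;> rcases he2 with h' | h' <;>
        simp only [h, h'] at hcase ⊢ <;> try norm_num at hcase
    have heq : ((k : ℤ) - m) * ((k : ℤ) + m + 2 * i) = -e1 * ((k : ℤ) + m) := by
      rw [hee] at hke
      nlinarith [hke, hme]
    by_cases hizero : i = 0
    · subst hizero
      have hS : (0 : ℤ) < (k : ℤ) + m := by linarith
      have hd : (k : ℤ) - m = -e1 := by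
        have h2' : ((k : ℤ) - m) * ((k : ℤ) + m) = -e1 * ((k : ℤ) + m) := by
          have := heq; push_cast at this ⊢; linarith [this]
        exact mul_right_cancel₀ (by linarith) h2'
      have hodd : Odd (k + m) := by
        rcases he1 with h | h <;> rw [h] at hd
        · have h' : (m : ℤ) = (k : ℤ) + 1 := by linarith
          have h'' : m = k + 1 := by exact_mod_cast h'
          subst h''
          exact ⟨k, by ring⟩
        · have h' : (k : ℤ) = (m : ℤ) + 1 := by linarith
          have h'' : k = m + 1 := by exact_mod_cast h'
          subst h''
          exact ⟨m, by ring⟩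
      have hcontra : e1 * e2 = -1 := by rw [hpar, hodd.neg_one_pow]
      rw [hee] at hcontra
      rcases he2 with h | h <;> rw [h] at hcontra <;> norm_num at hcontra
    · -- i ≥ 1: size contradiction
      have hi1 : (1 : ℤ) ≤ (i : ℤ) := by exact_mod_cast Nat.one_le_iff_ne_zero.mpr hizero
      rcases he1 with h | h <;> rw [h] at heq <;> norm_num at heq
      · rcases le_or_gt (m : ℤ) (k : ℤ) with hd | hd
        · linarith [mul_nonneg (show (0:ℤ) ≤ (k:ℤ) - m by linarith)
            (show (0:ℤ) ≤ (k:ℤ) + m + 2*i by linarith)]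
        · linarith [mul_le_mul_of_nonneg_right (show (k:ℤ) - m ≤ -1 by linarith)
            (show (0:ℤ) ≤ (k:ℤ) + m + 2*i by linarith)]
      · rcases le_or_gt (k : ℤ) (m : ℤ) with hd | hd
        · linarith [mul_nonpos_of_nonpos_of_nonneg (show (k:ℤ) - m ≤ 0 by linarith)
            (show (0:ℤ) ≤ (k:ℤ) + m + 2*i by linarith)]
        · linarith [mul_le_mul_of_nonneg_right (show (1:ℤ) ≤ (k:ℤ) - m by linarith)
            (show (0:ℤ) ≤ (k:ℤ) + m + 2*i by linarith)]
end

section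
/- Define γ⁺(n,i) as the number of divisors k of 2n with k(k + 2i + (-1)^(n+k+i))/2 = n, and γ⁻(n,i) similarly with -(-1)^(n+k+i). Then γ⁺(n,0) + 2·Σ_{i=1}^{n} γ⁺(n,i) = 4·d_{1,4}(n), where d_{1,4}(n) is the number of divisors of n congruent to 1 mod 4. -/
open Finset

/-- `ε = +1` solutions. -/
def Bset (n i : ℕ) : Finset ℕ :=
  (2 * n).divisors.filter (fun k => k * (k + 2 * i + 1) = 2 * n ∧ (n + k + i) % 2 = 0)

/-- `ε = -1` solutions (equation written subtraction-free: `k(k+2i) = 2n + k`). -/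
def Cset (n i : ℕ) : Finset ℕ :=
  (2 * n).divisors.filter (fun k => k * (k + 2 * i) = 2 * n + k ∧ (n + k + i) % 2 = 1)

lemma gammaPlus_eq (n i : ℕ) : gammaPlus n i = (Bset n i).card + (Cset n i).card := by
  classical
  rw [gammaPlus, ← Finset.card_union_of_disjoint (s := Bset n i) (t := Cset n i)]
  · congr 1
    ext k
    simp only [Bset, Cset, Finset.mem_union, Finset.mem_filter]
    rcases Nat.even_or_odd (n + k + i) with he | ho
    · rw [he.neg_one_pow]
      have h2 : (n + k + i) % 2 = 0 := Nat.even_iff.mp he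
      constructor
      · rintro ⟨hd, heq⟩
        refine Or.inl ⟨hd, ?_, h2⟩
        have h : (k : ℤ) * (k + 2 * i + 1) = 2 * n := heq
        exact_mod_cast h
      · rintro (⟨hd, heq, -⟩ | ⟨-, -, h1⟩)
        · exact ⟨hd, by exact_mod_cast heq⟩
        · omega
    · rw [ho.neg_one_pow]
      have h2 : (n + k + i) % 2 = 1 := Nat.odd_iff.mp ho
      constructor
      · rintro ⟨hd, heq⟩
        refine Or.inr ⟨hd, ?_, h2⟩
        have h : (k : ℤ) * (k + 2 * i) = 2 * n + k := by linear_combination heq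
        exact_mod_cast h
      · rintro (⟨-, -, h1⟩ | ⟨hd, heq, -⟩)
        · omega
        · refine ⟨hd, ?_⟩
          have h : (k : ℤ) * (k + 2 * i) = 2 * n + k := by exact_mod_cast heq
          linear_combination h
  · rw [Finset.disjoint_left]
    intro k hk1 hk2
    simp only [Bset, Cset, Finset.mem_filter] at hk1 hk2
    omega

lemma Cset_succ (n i : ℕ) : Cset n (i + 1) = Bset n i := by
  ext k
  simp only [Cset, Bset, Finset.mem_filter]
  constructor
  · rintro ⟨hd, heq, hp⟩
    have hk : 0 < k := Nat.pos_of_mem_divisors hd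
    exact ⟨hd, by nlinarith, by omega⟩
  · rintro ⟨hd, heq, hp⟩
    exact ⟨hd, by nlinarith, by omega⟩

lemma Cset_zero_card (n : ℕ) (hn : 0 < n) : (Cset n 0).card = (Bset n 0).card := by
  apply Finset.card_bij (fun k _ => k - 1)
  · intro k hk
    simp only [Cset, Finset.mem_filter] at hk
    obtain ⟨hd, heq, hp⟩ := hk
    have hk1 : 0 < k := Nat.pos_of_mem_divisors hd
    have hk2 : 2 ≤ k := by nlinarith
    simp only [Bset, Finset.mem_filter]
    have hkk : k - 1 + 2 * 0 + 1 = k := by omega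
    have heq' : (k - 1) * (k - 1 + 2 * 0 + 1) = 2 * n := by
      rw [hkk]
      have h1 : (k - 1) * k + k = k * (k + 2 * 0) := by
        have : k - 1 + 1 = k := by omega
        nlinarith [Nat.sub_add_cancel (by omega : 1 ≤ k)]
      omega
    refine ⟨Nat.mem_divisors.mpr ⟨⟨k - 1 + 2 * 0 + 1, heq'.symm ▸ rfl⟩, by omega⟩, heq', by omega⟩
  · intro a ha b hb hab
    simp only [Cset, Finset.mem_filter] at ha hb
    have := Nat.pos_of_mem_divisors ha.1
    have := Nat.pos_of_mem_divisors hb.1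
    omega
  · intro b hb
    simp only [Bset, Finset.mem_filter] at hb
    obtain ⟨hd, heq, hp⟩ := hb
    have hb1 : 0 < b := Nat.pos_of_mem_divisors hd
    refine ⟨b + 1, ?_, by omega⟩
    simp only [Cset, Finset.mem_filter]
    refine ⟨Nat.mem_divisors.mpr ⟨⟨b, by nlinarith⟩, by omega⟩, by nlinarith, by omega⟩

lemma Bset_top (n : ℕ) (hn : 0 < n) : Bset n n = ∅ := by
  ext k
  simp only [Bset, Finset.mem_filter, Finset.notMem_empty, iff_false]
  rintro ⟨hd, heq, -⟩
  have hk : 0 < k := Nat.pos_of_mem_divisors hd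
  nlinarith

/-- Key parity lemma: the parity condition picks out the odd factor being `1 mod 4`. -/
lemma key_parity (n k m i : ℕ) (hk : 0 < k) (hkm : k * m = 2 * n) (hm : m = k + 2 * i + 1) :
    ((n + k + i) % 2 = 0 ↔ (if k % 2 = 1 then k % 4 else m % 4) = 1) := by
  rcases Nat.even_or_odd k with hke | hko
  · obtain ⟨s, hs⟩ := hke
    have hs2 : k = 2 * s := by omega
    have hn2 : n = s * m := by
      have h2 : 2 * (s * m) = 2 * n := by rw [← hkm, hs2]; ring
      omega
    have hmo : m % 2 = 1 := by omega
    have hnp : n % 2 = s % 2 := by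
      rw [hn2, Nat.mul_mod, hmo, Nat.mul_one]
      omega
    rw [if_neg (by omega)]
    omega
  · obtain ⟨s, hs⟩ := hko
    have hn2 : n = (2 * s + 1) * (s + i + 1) := by
      have h2 : 2 * ((2 * s + 1) * (s + i + 1)) = 2 * n := by
        rw [← hkm, hm, hs]; ring
      omega
    have hnp : n % 2 = (s + i + 1) % 2 := by
      rw [hn2, Nat.mul_mod]
      have h1 : (2 * s + 1) % 2 = 1 := by omega
      rw [h1, Nat.one_mul]
      omega
    rw [if_pos (by omega)]
    omega

lemma biUnion_card (n : ℕ) (hn : 0 < n) :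
    ((Finset.range n).biUnion (Bset n)).card = d4 1 n := by
  classical
  rw [d4]
  apply Finset.card_bij (fun k _ => if k % 2 = 1 then k else 2 * n / k)
  · intro k hk
    simp only [Finset.mem_biUnion, Finset.mem_range] at hk
    obtain ⟨i, hi, hkB⟩ := hk
    simp only [Bset, Finset.mem_filter] at hkB
    obtain ⟨hd, heq, hp⟩ := hkB
    have hkpos : 0 < k := Nat.pos_of_mem_divisors hd
    have hdivm : 2 * n / k = k + 2 * i + 1 :=
      Nat.div_eq_of_eq_mul_right hkpos heq.symm
    have hkey := (key_parity n k (k + 2 * i + 1) i hkpos heq rfl).mp hp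
    simp only [Finset.mem_filter, Nat.mem_divisors]
    rcases Nat.even_or_odd k with hke | hko
    · obtain ⟨s, hs⟩ := hke
      have hk2 : ¬ (k % 2 = 1) := by omega
      rw [if_neg hk2] at hkey ⊢
      rw [hdivm]
      have hn2 : n = s * (k + 2 * i + 1) := by
        have h2 : 2 * (s * (k + 2 * i + 1)) = 2 * n := by
          rw [← heq, show k = 2 * s by omega]; ring
        omega
      exact ⟨⟨⟨s, by rw [hn2]; ring⟩, by omega⟩, hkey⟩
    · have hk2 : k % 2 = 1 := Nat.odd_iff.mp hko
      rw [if_pos hk2] at hkey ⊢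
      obtain ⟨f, hf⟩ : 2 ∣ (k + 2 * i + 1) := by omega
      have hn2 : n = k * f := by
        have h2 : 2 * (k * f) = 2 * n := by rw [← heq, hf]; ring
        omega
      exact ⟨⟨⟨f, hn2⟩, by omega⟩, hkey⟩
  · -- injectivity
    intro a ha b hb hab
    simp only [Finset.mem_biUnion, Finset.mem_range] at ha hb
    obtain ⟨i, hi, haB⟩ := ha
    obtain ⟨j, hj, hbB⟩ := hb
    simp only [Bset, Finset.mem_filter] at haB hbB
    obtain ⟨had, haeq, -⟩ := haB
    obtain ⟨hbd, hbeq, -⟩ := hbB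
    have hap : 0 < a := Nat.pos_of_mem_divisors had
    have hbp : 0 < b := Nat.pos_of_mem_divisors hbd
    have hda : 2 * n / a = a + 2 * i + 1 := Nat.div_eq_of_eq_mul_right hap haeq.symm
    have hdb : 2 * n / b = b + 2 * j + 1 := Nat.div_eq_of_eq_mul_right hbp hbeq.symm
    by_cases h1 : a % 2 = 1 <;> by_cases h2 : b % 2 = 1
    · rw [if_pos h1, if_pos h2] at hab; exact hab
    · rw [if_pos h1, if_neg h2, hdb] at hab
      -- a = b + 2j + 1, and b * a = 2n = a * (a + 2i + 1) so b = a + 2i + 1 > a, contradiction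
      have hba : b * a = 2 * n := by rw [hab]; exact hbeq
      have : a * b = a * (a + 2 * i + 1) := by rw [mul_comm a b, hba]; exact haeq.symm
      have hb2 : b = a + 2 * i + 1 := Nat.eq_of_mul_eq_mul_left hap this
      omega
    · rw [if_neg h1, if_pos h2, hda] at hab
      have hba : a * b = 2 * n := by rw [← hab]; exact haeq
      have : b * a = b * (b + 2 * j + 1) := by rw [mul_comm b a, hba]; exact hbeq.symm
      have ha2 : a = b + 2 * j + 1 := Nat.eq_of_mul_eq_mul_left hbp this
      omega
    · rw [if_neg h1, if_neg h2, hda, hdb] at hab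
      -- a + 2i + 1 = b + 2j + 1 =: M, a * M = b * M
      have : a * (a + 2 * i + 1) = b * (a + 2 * i + 1) := by
        rw [haeq, hab]; exact hbeq.symm
      exact Nat.eq_of_mul_eq_mul_right (by omega) this
  · -- surjectivity
    intro d hdmem
    simp only [Finset.mem_filter, Nat.mem_divisors] at hdmem
    obtain ⟨⟨hdvd, hn0⟩, hd4⟩ := hdmem
    have hdpos : 0 < d := Nat.pos_of_dvd_of_pos hdvd hn
    have hdo : d % 2 = 1 := by omega
    obtain ⟨f, hf⟩ := hdvd
    have hfpos : 0 < f := by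
      rcases Nat.eq_zero_or_pos f with h | h
      · subst h; omega
      · exact h
    have hdn : d ≤ n := Nat.le_of_dvd hn ⟨f, hf⟩
    have hfn : f ≤ n := Nat.le_of_dvd hn ⟨d, by rw [hf]; ring⟩
    rcases Nat.lt_trichotomy d (2 * f) with hlt | heqc | hgt
    · -- d < 2f : k = d, m = 2f
      set i := (2 * f - d - 1) / 2 with hi
      have hmi : 2 * f = d + 2 * i + 1 := by omega
      have heq : d * (d + 2 * i + 1) = 2 * n := by rw [← hmi, hf]; ring
      have hiltn : i < n := by omega
      have hp : (n + d + i) % 2 = 0 := by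
        refine (key_parity n d (d + 2 * i + 1) i hdpos heq rfl).mpr ?_
        rw [if_pos hdo]; exact hd4
      refine ⟨d, ?_, by rw [if_pos hdo]⟩
      simp only [Finset.mem_biUnion, Finset.mem_range]
      refine ⟨i, hiltn, ?_⟩
      simp only [Bset, Finset.mem_filter, Nat.mem_divisors]
      exact ⟨⟨⟨d + 2 * i + 1, heq.symm⟩, by omega⟩, heq, hp⟩
    · omega
    · -- 2f < d : k = 2f, m = d
      set e := 2 * f with he
      set i := (d - e - 1) / 2 with hi
      have hmi : d = e + 2 * i + 1 := by omega
      have heq : e * (e + 2 * i + 1) = 2 * n := by rw [← hmi, he, hf]; ring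
      have hiltn : i < n := by omega
      have hepos : 0 < e := by omega
      have hp : (n + e + i) % 2 = 0 := by
        refine (key_parity n e (e + 2 * i + 1) i hepos heq rfl).mpr ?_
        rw [if_neg (by omega)]
        rw [← hmi]; exact hd4
      have hdiv : 2 * n / e = e + 2 * i + 1 := Nat.div_eq_of_eq_mul_right hepos heq.symm
      refine ⟨e, ?_, ?_⟩
      · simp only [Finset.mem_biUnion, Finset.mem_range]
        refine ⟨i, hiltn, ?_⟩
        simp only [Bset, Finset.mem_filter, Nat.mem_divisors]
        exact ⟨⟨⟨e + 2 * i + 1, heq.symm⟩, by omega⟩, heq, hp⟩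
      · rw [if_neg (by omega), hdiv, ← hmi]

theorem stmt6 (n : ℕ) (hn : 0 < n) :
    gammaPlus n 0 + 2 * ∑ i ∈ Finset.Icc 1 n, gammaPlus n i = 4 * d4 1 n := by
  classical
  have hIcc : ∑ i ∈ Finset.Icc 1 n, gammaPlus n i
      = ∑ i ∈ Finset.range n, gammaPlus n (i + 1) := by
    rw [← Finset.Ico_add_one_right_eq_Icc, Finset.sum_Ico_eq_sum_range]
    exact Finset.sum_congr (by norm_num) (fun i _ => by rw [add_comm])
  have hsplit : ∀ i, gammaPlus n (i + 1)
      = (Bset n (i + 1)).card + (Bset n i).card := by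
    intro i
    rw [gammaPlus_eq, Cset_succ]
  have hsum : ∑ i ∈ Finset.range n, gammaPlus n (i + 1)
      = ∑ i ∈ Finset.range n, (Bset n (i + 1)).card
        + ∑ i ∈ Finset.range n, (Bset n i).card := by
    rw [← Finset.sum_add_distrib]
    exact Finset.sum_congr rfl (fun i _ => hsplit i)
  have hshift : ∑ i ∈ Finset.range n, (Bset n (i + 1)).card + (Bset n 0).card
      = ∑ i ∈ Finset.range n, (Bset n i).card + (Bset n n).card := by
    rw [← Finset.sum_range_succ' (fun i => (Bset n i).card) n, Finset.sum_range_succ]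
  have hBn : (Bset n n).card = 0 := by rw [Bset_top n hn]; rfl
  have hdisj : ∀ x ∈ Finset.range n, ∀ y ∈ Finset.range n, x ≠ y →
      Disjoint (Bset n x) (Bset n y) := by
    intro x _ y _ hxy
    rw [Finset.disjoint_left]
    intro k hk1 hk2
    simp only [Bset, Finset.mem_filter] at hk1 hk2
    obtain ⟨hd, he1, -⟩ := hk1
    obtain ⟨-, he2, -⟩ := hk2
    have hkpos : 0 < k := Nat.pos_of_mem_divisors hd
    have : k + 2 * x + 1 = k + 2 * y + 1 :=
      Nat.eq_of_mul_eq_mul_left hkpos (he1.trans he2.symm)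
    omega
  have hT : ∑ i ∈ Finset.range n, (Bset n i).card = d4 1 n := by
    rw [← Finset.card_biUnion hdisj]
    exact biUnion_card n hn
  rw [hIcc, hsum, gammaPlus_eq, Cset_zero_card n hn]
  omega
end

section
/- Define γ⁻(n,i) as the number of divisors k of 2n with k(k + 2i - (-1)^(n+k+i))/2 = n. Then γ⁻(n,0) + 2·Σ_{i=1}^{n} γ⁻(n,i) = 4·d_{3,4}(n), where d_{3,4}(n) is the number of divisors of n congruent to 3 mod 4. -/
/-- The defining condition of `gammaMinus`, as a predicate in the divisor `k`
and the parameter `i`. -/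
def Qp (n k i : ℕ) : Prop :=
  (k : ℤ) * ((k : ℤ) + 2 * i - (-1 : ℤ) ^ ((n + k + i : ℕ))) = 2 * n

instance (n k i : ℕ) : Decidable (Qp n k i) := inferInstanceAs (Decidable (_ = _))

/-- The weighted count of solutions `i` for a fixed divisor `k`. -/
def fcount (n k : ℕ) : ℕ :=
  (if Qp n k 0 then 1 else 0)
    + 2 * ((Finset.Icc 1 n).filter (fun i => Qp n k i)).card

lemma qp_iff (n k m i : ℕ) (hk : k ≠ 0) (hkm : k * m = 2 * n) :
    Qp n k i ↔ (((n + k + i) % 2 = 0 ∧ (k : ℤ) + 2 * i - 1 = m) ∨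
      ((n + k + i) % 2 = 1 ∧ (k : ℤ) + 2 * i + 1 = m)) := by
  have hk' : (k : ℤ) ≠ 0 := Int.natCast_ne_zero.mpr hk
  have h2 : (2 : ℤ) * n = (k : ℤ) * m := by
    have h := congrArg (fun x : ℕ => (x : ℤ)) hkm
    push_cast at h
    omega
  unfold Qp
  rcases Nat.even_or_odd (n + k + i) with h | h
  · rw [h.neg_one_pow, h2, mul_right_inj' hk']
    have hp := Nat.even_iff.mp h
    constructor
    · intro he; exact Or.inl ⟨hp, by omega⟩
    · rintro (⟨_, he⟩ | ⟨hq, _⟩) <;> omega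
  · rw [h.neg_one_pow, h2, mul_right_inj' hk']
    have hp := Nat.odd_iff.mp h
    constructor
    · intro he; exact Or.inr ⟨hp, by omega⟩
    · rintro (⟨hq, _⟩ | ⟨_, he⟩) <;> omega

/-- Key computation: for a factorization `2n = k*m` with `k` odd and `m` even,
the combined weighted counts for the divisors `k` and `m` equal `4` exactly
when `k ≡ 3 mod 4`, and `0` otherwise. -/
lemma fcount_core (n k m : ℕ) (hn : 0 < n) (hkm : k * m = 2 * n)
    (hk : k % 2 = 1) (hm : m % 2 = 0) :
    fcount n k + fcount n m = if k % 4 = 3 then 4 else 0 := by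
  have hk0 : k ≠ 0 := by omega
  have hm0 : m ≠ 0 := by intro h; rw [h, mul_zero] at hkm; omega
  have hmk : m * k = 2 * n := by rw [mul_comm]; exact hkm
  have hkle : k ≤ 2 * n := Nat.le_of_dvd (by omega) ⟨m, hkm.symm⟩
  have hmle : m ≤ 2 * n := Nat.le_of_dvd (by omega) ⟨k, hmk.symm⟩
  obtain ⟨a, ha⟩ : 2 ∣ (k - 1) := by omega
  obtain ⟨b, hb⟩ : 2 ∣ m := by omega
  obtain ⟨c, hc⟩ : ∃ c, 2 * n = m + 4 * c := by
    refine ⟨a * b, ?_⟩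
    have h1 : k = 2 * a + 1 := by omega
    rw [← hkm, h1, hb]; ring
  clear ha hb
  have hQk : ∀ i, Qp n k i ↔ (((n + k + i) % 2 = 0 ∧ (k : ℤ) + 2 * i - 1 = m) ∨
      ((n + k + i) % 2 = 1 ∧ (k : ℤ) + 2 * i + 1 = m)) :=
    fun i => qp_iff n k m i hk0 hkm
  have hQm : ∀ i, Qp n m i ↔ (((n + m + i) % 2 = 0 ∧ (m : ℤ) + 2 * i - 1 = k) ∨
      ((n + m + i) % 2 = 1 ∧ (m : ℤ) + 2 * i + 1 = k)) :=
    fun i => qp_iff n m k i hm0 hmk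
  by_cases hC : k % 4 = 3
  · rw [if_pos hC]
    rcases Nat.lt_or_ge k m with hlt | hge
    · -- k < m
      obtain ⟨t, ht⟩ : ∃ t, m = k + 2 * t + 1 := ⟨(m - k - 1) / 2, by omega⟩
      have hfm_filter : (Finset.Icc 1 n).filter (fun i => Qp n m i) = ∅ := by
        apply Finset.filter_eq_empty_iff.mpr
        intro i hi
        rw [Finset.mem_Icc] at hi
        rw [hQm i]
        rintro (⟨_, h⟩ | ⟨_, h⟩) <;> omega
      rcases Nat.eq_zero_or_pos t with ht0 | ht1
      · subst ht0
        have hfk_filter : (Finset.Icc 1 n).filter (fun i => Qp n k i) = {1} := by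
          ext i
          simp only [Finset.mem_filter, Finset.mem_Icc, Finset.mem_singleton, hQk i]
          omega
        have hk0' : Qp n k 0 := by rw [hQk 0]; omega
        have hm0' : Qp n m 0 := by rw [hQm 0]; omega
        unfold fcount
        rw [hfk_filter, hfm_filter, if_pos hk0', if_pos hm0']
        simp
      · have hfk_filter : (Finset.Icc 1 n).filter (fun i => Qp n k i) = {t, t + 1} := by
          ext i
          simp only [Finset.mem_filter, Finset.mem_Icc, Finset.mem_insert,
            Finset.mem_singleton, hQk i]
          omega
        have hk0' : ¬ Qp n k 0 := by rw [hQk 0]; omega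
        have hm0' : ¬ Qp n m 0 := by rw [hQm 0]; omega
        unfold fcount
        rw [hfk_filter, hfm_filter, if_neg hk0', if_neg hm0',
          Finset.card_pair (by omega)]
        simp
    · -- m < k (k ≠ m since parities differ)
      have hlt : m < k := by omega
      obtain ⟨t, ht⟩ : ∃ t, k = m + 2 * t + 1 := ⟨(k - m - 1) / 2, by omega⟩
      have hfk_filter : (Finset.Icc 1 n).filter (fun i => Qp n k i) = ∅ := by
        apply Finset.filter_eq_empty_iff.mpr
        intro i hi
        rw [Finset.mem_Icc] at hi
        rw [hQk i]
        rintro (⟨_, h⟩ | ⟨_, h⟩) <;> omega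
      rcases Nat.eq_zero_or_pos t with ht0 | ht1
      · subst ht0
        have hfm_filter : (Finset.Icc 1 n).filter (fun i => Qp n m i) = {1} := by
          ext i
          simp only [Finset.mem_filter, Finset.mem_Icc, Finset.mem_singleton, hQm i]
          omega
        have hk0' : Qp n k 0 := by rw [hQk 0]; omega
        have hm0' : Qp n m 0 := by rw [hQm 0]; omega
        unfold fcount
        rw [hfk_filter, hfm_filter, if_pos hk0', if_pos hm0']
        simp
      · have hfm_filter : (Finset.Icc 1 n).filter (fun i => Qp n m i) = {t, t + 1} := by
          ext i
          simp only [Finset.mem_filter, Finset.mem_Icc, Finset.mem_insert,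
            Finset.mem_singleton, hQm i]
          omega
        have hk0' : ¬ Qp n k 0 := by rw [hQk 0]; omega
        have hm0' : ¬ Qp n m 0 := by rw [hQm 0]; omega
        unfold fcount
        rw [hfk_filter, hfm_filter, if_neg hk0', if_neg hm0',
          Finset.card_pair (by omega)]
        simp
  · rw [if_neg hC]
    have hfk_filter : (Finset.Icc 1 n).filter (fun i => Qp n k i) = ∅ := by
      apply Finset.filter_eq_empty_iff.mpr
      intro i hi
      rw [hQk i]
      rintro (⟨h1, h2⟩ | ⟨h1, h2⟩) <;> omega
    have hfm_filter : (Finset.Icc 1 n).filter (fun i => Qp n m i) = ∅ := by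
      apply Finset.filter_eq_empty_iff.mpr
      intro i hi
      rw [hQm i]
      rintro (⟨h1, h2⟩ | ⟨h1, h2⟩) <;> omega
    have hk0' : ¬ Qp n k 0 := by rw [hQk 0]; omega
    have hm0' : ¬ Qp n m 0 := by rw [hQm 0]; omega
    unfold fcount
    rw [hfk_filter, hfm_filter, if_neg hk0', if_neg hm0']
    simp

lemma cofactor_even (n d : ℕ) (hn : 0 < n) (hdvd : d ∣ 2 * n) (hd : d % 2 = 1) :
    (2 * n / d) % 2 = 0 := by
  by_contra hodd
  have h2 : (2 * n / d) % 2 = 1 := by omega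
  have h3 : (d * (2 * n / d)) % 2 = 1 := by rw [Nat.mul_mod, hd, h2]
  rw [Nat.mul_div_cancel' hdvd] at h3
  omega

lemma fcount_even_even (n k : ℕ) (hn : 0 < n) (hdvd : k ∣ 2 * n) (hk0 : k ≠ 0)
    (h1 : k % 2 = 0) (h2 : (2 * n / k) % 2 = 0) : fcount n k = 0 := by
  have hkm : k * (2 * n / k) = 2 * n := Nat.mul_div_cancel' hdvd
  have hnone : ∀ i, ¬ Qp n k i := by
    intro i hQ
    rw [qp_iff n k (2 * n / k) i hk0 hkm] at hQ
    rcases hQ with ⟨_, h⟩ | ⟨_, h⟩ <;> omega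
  unfold fcount
  rw [if_neg (hnone 0), Finset.filter_eq_empty_iff.mpr (fun i _ => hnone i),
    Finset.card_empty]

theorem stmt7 (n : ℕ) (hn : 0 < n) :
    gammaMinus n 0 + 2 * ∑ i ∈ Finset.Icc 1 n, gammaMinus n i = 4 * d4 3 n := by
  classical
  have hg : ∀ i : ℕ, gammaMinus n i
      = ∑ k ∈ (2 * n).divisors, if Qp n k i then 1 else 0 := by
    intro i
    rw [gammaMinus, Finset.card_filter]
    rfl
  have hswap : ∑ i ∈ Finset.Icc 1 n, gammaMinus n i
      = ∑ k ∈ (2 * n).divisors, ((Finset.Icc 1 n).filter (fun i => Qp n k i)).card := by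
    simp_rw [hg]
    rw [Finset.sum_comm]
    exact Finset.sum_congr rfl fun k _ => (Finset.card_filter _ _).symm
  rw [hg 0, hswap, Finset.mul_sum, ← Finset.sum_add_distrib]
  have hmain : ∑ k ∈ (2 * n).divisors,
      ((if Qp n k 0 then 1 else 0)
        + 2 * ((Finset.Icc 1 n).filter (fun i => Qp n k i)).card)
      = ∑ k ∈ (2 * n).divisors, fcount n k := rfl
  rw [hmain]
  set D := (2 * n).divisors with hD
  have h2n0 : 2 * n ≠ 0 := by omega
  rw [← Finset.sum_filter_add_sum_filter_not D (fun k => k % 2 = 1) (fcount n)]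
  have hsecond : ∑ k ∈ D.filter (fun k => ¬ k % 2 = 1), fcount n k
      = ∑ d ∈ D.filter (fun k => k % 2 = 1), fcount n (2 * n / d) := by
    rw [← Finset.sum_filter_add_sum_filter_not (D.filter (fun k => ¬ k % 2 = 1))
      (fun k => (2 * n / k) % 2 = 1) (fcount n)]
    have hzero : ∑ k ∈ (D.filter (fun k => ¬ k % 2 = 1)).filter
        (fun k => ¬ (2 * n / k) % 2 = 1), fcount n k = 0 := by
      apply Finset.sum_eq_zero
      intro k hk
      simp only [Finset.mem_filter, hD, Nat.mem_divisors] at hk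
      exact fcount_even_even n k hn hk.1.1.1 (by
        intro h; rw [h] at hk; exact absurd (Nat.eq_zero_of_zero_dvd hk.1.1.1).symm (by omega))
        (by omega) (by omega)
    rw [hzero, add_zero]
    apply Finset.sum_nbij' (i := fun k => 2 * n / k) (j := fun d => 2 * n / d)
    · intro k hk
      simp only [Finset.mem_filter, hD, Nat.mem_divisors] at hk ⊢
      refine ⟨⟨⟨k, ?_⟩, h2n0⟩, hk.2⟩
      rw [Nat.div_mul_cancel hk.1.1.1]
    · intro d hd
      simp only [Finset.mem_filter, hD, Nat.mem_divisors] at hd ⊢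
      have hdvd : d ∣ 2 * n := hd.1.1
      have hce := cofactor_even n d hn hdvd hd.2
      refine ⟨⟨⟨⟨d, ?_⟩, h2n0⟩, by omega⟩, ?_⟩
      · rw [Nat.div_mul_cancel hdvd]
      · rw [Nat.div_div_self hdvd h2n0]; exact hd.2
    · intro k hk
      simp only [Finset.mem_filter, hD, Nat.mem_divisors] at hk
      exact Nat.div_div_self hk.1.1.1 h2n0
    · intro d hd
      simp only [Finset.mem_filter, hD, Nat.mem_divisors] at hd
      exact Nat.div_div_self hd.1.1 h2n0
    · intro k hk
      simp only [Finset.mem_filter, hD, Nat.mem_divisors] at hk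
      rw [Nat.div_div_self hk.1.1.1 h2n0]
  rw [hsecond, ← Finset.sum_add_distrib]
  have hcore : ∑ d ∈ D.filter (fun k => k % 2 = 1),
      (fcount n d + fcount n (2 * n / d))
      = ∑ d ∈ D.filter (fun k => k % 2 = 1), (if d % 4 = 3 then 4 else 0) := by
    apply Finset.sum_congr rfl
    intro d hd
    simp only [Finset.mem_filter, hD, Nat.mem_divisors] at hd
    exact fcount_core n d (2 * n / d) hn (Nat.mul_div_cancel' hd.1.1) hd.2
      (cofactor_even n d hn hd.1.1 hd.2)
  rw [hcore, ← Finset.sum_filter, Finset.sum_const, smul_eq_mul, mul_comm]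
  have hset : (D.filter (fun k => k % 2 = 1)).filter (fun d => d % 4 = 3)
      = n.divisors.filter (fun d => d % 4 = 3) := by
    ext d
    simp only [Finset.mem_filter, hD, Nat.mem_divisors]
    constructor
    · rintro ⟨⟨⟨hdvd, -⟩, hodd⟩, h43⟩
      refine ⟨⟨?_, by omega⟩, h43⟩
      have hco : Nat.Coprime d 2 := by
        rw [Nat.coprime_two_right]
        exact Nat.odd_iff.mpr hodd
      exact (Nat.Coprime.dvd_of_dvd_mul_left hco hdvd)
    · rintro ⟨⟨hdvd, -⟩, h43⟩
      exact ⟨⟨⟨hdvd.mul_left 2, h2n0⟩, by omega⟩, h43⟩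
  rw [hset]
  rfl
end

section
/- For a positive integer n, the following are equivalent: (a) n has no divisor congruent to 3 mod 4; (b) n = 2^k · z for some integer k ≥ 0 and some primitive Pythagorean triple (x, y, z). -/
-- Lemma F: prime p ≡ 3 mod 4 dividing a sum of two squares divides both
lemma lemF {p x y : ℕ} (hp : p.Prime) (hp4 : p % 4 = 3) (h : p ∣ x ^ 2 + y ^ 2) :
    p ∣ x ∧ p ∣ y := by
  haveI : Fact p.Prime := ⟨hp⟩
  have hcast : (x : ZMod p) ^ 2 + (y : ZMod p) ^ 2 = 0 := by
    have := (ZMod.natCast_eq_zero_iff _ p).mpr h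
    push_cast at this
    exact this
  have hy : (y : ZMod p) = 0 := by
    by_contra hy0
    have : ((x : ZMod p) * (y : ZMod p)⁻¹) ^ 2 = -1 := by
      calc ((x : ZMod p) * (y : ZMod p)⁻¹) ^ 2
          = (x : ZMod p) ^ 2 * (((y : ZMod p)) ^ 2)⁻¹ := by rw [mul_pow, inv_pow]
        _ = -((y : ZMod p) ^ 2 * (((y : ZMod p)) ^ 2)⁻¹) := by
            rw [← neg_mul]; congr 1; linear_combination hcast
        _ = -1 := by rw [mul_inv_cancel₀ (pow_ne_zero 2 hy0)]
    exact (ZMod.exists_sq_eq_neg_one_iff (p := p)).mp ⟨(x : ZMod p) * (y : ZMod p)⁻¹, by rw [← this, pow_two]⟩ (by rw [hp4])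
  have hx : (x : ZMod p) = 0 := by
    rw [hy] at hcast
    simpa [pow_eq_zero_iff] using hcast
  exact ⟨(ZMod.natCast_eq_zero_iff _ p).mp hx,
    (ZMod.natCast_eq_zero_iff _ p).mp hy⟩

-- Lemma E: d % 4 = 3 → some prime divisor ≡ 3 mod 4
lemma lemE : ∀ d : ℕ, d % 4 = 3 → ∃ p : ℕ, p.Prime ∧ p ∣ d ∧ p % 4 = 3 := by
  intro d
  induction d using Nat.strong_induction_on with
  | _ d ih =>
    intro hd
    have hd1 : 1 < d := by omega
    have hp := Nat.minFac_prime (by omega : d ≠ 1)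
    have hpd : d.minFac ∣ d := Nat.minFac_dvd d
    by_cases h3 : d.minFac % 4 = 3
    · exact ⟨d.minFac, hp, hpd, h3⟩
    · have hodd : d % 2 = 1 := by omega
      have hp2 : d.minFac ≠ 2 := by
        rintro h2
        have := hpd
        rw [h2] at this
        omega
      have hpodd : d.minFac % 2 = 1 := by
        rcases hp.eq_two_or_odd with h | h
        · exact absurd h hp2
        · exact h
      have hp1 : d.minFac % 4 = 1 := by
        have := Nat.mod_mod_of_dvd d.minFac (by norm_num : 2 ∣ 4)
        omega
      obtain ⟨d', hd'⟩ := hpd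
      have hd'4 : d' % 4 = 3 := by
        have h1 : d % 4 = (d.minFac % 4) * (d' % 4) % 4 := by
          conv_lhs => rw [hd']
          rw [Nat.mul_mod]
        rw [hp1, one_mul] at h1
        omega
      have hlt : d' < d := by
        have h2 : 2 ≤ d.minFac := hp.two_le
        have hne : d' ≠ 0 := by rintro rfl; omega
        calc d' = 1 * d' := (one_mul d').symm
        _ < d.minFac * d' := by
            exact (Nat.mul_lt_mul_right (Nat.pos_of_ne_zero hne)).mpr hp.one_lt
        _ = d := hd'.symm
      obtain ⟨p, hp', hpd', hp3⟩ := ih d' hlt hd'4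
      exact ⟨p, hp', hpd'.trans ⟨_, by rw [hd', mul_comm]⟩, hp3⟩


open Zsqrtd

local notation "ℤ[i]" => GaussianInt

lemma gnorm_dvd {a b : ℤ[i]} (h : a ∣ b) : a.norm ∣ b.norm := by
  obtain ⟨c, rfl⟩ := h
  rw [Zsqrtd.norm_mul]
  exact dvd_mul_right _ _

lemma gprime_of_norm_prime {π : ℤ[i]} {p : ℕ} (hp : p.Prime) (h : π.norm = p) : Prime π := by
  rw [← UniqueFactorizationMonoid.irreducible_iff_prime]
  constructor
  · intro hu
    have := Zsqrtd.norm_eq_one_iff.mpr hu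
    rw [h] at this
    simp only [Int.natAbs_natCast] at this
    exact hp.one_lt.ne' this
  · intro a b hab
    have hnat : p = a.norm.natAbs * b.norm.natAbs := by
      have h2 : (p : ℤ) = a.norm * b.norm := by rw [← h, hab, Zsqrtd.norm_mul]
      have := congrArg Int.natAbs h2
      simpa [Int.natAbs_mul] using this
    rcases hp.eq_one_or_self_of_dvd a.norm.natAbs ⟨_, hnat⟩ with h1 | h1
    · exact Or.inl (Zsqrtd.norm_eq_one_iff.mp h1)
    · right
      apply Zsqrtd.norm_eq_one_iff.mp
      have hb1 : p * 1 = p * b.norm.natAbs := by rw [mul_one]; conv_lhs => rw [hnat, h1]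
      exact (Nat.eq_of_mul_eq_mul_left hp.pos hb1).symm

lemma lemB {π : ℤ[i]} {p : ℕ} (hp : p.Prime) (hp2 : p % 2 = 1) (h : π.norm = p) :
    ¬ star π ∣ π := by
  intro hd
  have hpdvd : ((p : ℤ) : ℤ[i]) ∣ π * π := by
    have h1 : ((p : ℤ) : ℤ[i]) = π * star π := by
      rw [← h, Zsqrtd.norm_eq_mul_conj]
    rw [h1]
    exact mul_dvd_mul_left π hd
  rw [Zsqrtd.intCast_dvd] at hpdvd
  obtain ⟨hre, him⟩ := hpdvd
  have hnorm : π.re * π.re + π.im * π.im = (p : ℤ) := by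
    have h0 : π.norm = π.re * π.re - (-1) * π.im * π.im := rfl
    rw [h] at h0
    linarith [h0]
  have hre' : (p : ℤ) ∣ π.re * π.re - π.im * π.im := by
    have h0 : (π * π).re = π.re * π.re + (-1) * π.im * π.im := rfl
    rw [h0] at hre
    convert hre using 1
    ring
  have hpZ : Prime (p : ℤ) := Nat.prime_iff_prime_int.mp hp
  have h2a : (p : ℤ) ∣ 2 * (π.re * π.re) := by
    have h0 : (p : ℤ) ∣ (π.re * π.re + π.im * π.im) + (π.re * π.re - π.im * π.im) :=
      dvd_add (hnorm ▸ dvd_refl _) hre'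
    convert h0 using 1
    ring
  have hpa : (p : ℤ) ∣ π.re := by
    rcases hpZ.dvd_mul.mp h2a with h' | h'
    · exfalso
      have h2 : p ∣ 2 := by exact_mod_cast h'
      have := Nat.le_of_dvd (by norm_num) h2
      have := hp.two_le
      omega
    · exact (hpZ.dvd_mul.mp h').elim id id
  have hpb : (p : ℤ) ∣ π.im := by
    have h' : (p : ℤ) ∣ π.im * π.im := by
      have h0 : (p:ℤ) ∣ (π.re * π.re + π.im * π.im) - π.re * π.re :=
        dvd_sub (hnorm ▸ dvd_refl _) (hpa.mul_right π.re)
      simpa using h0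
    exact (hpZ.dvd_mul.mp h').elim id id
  obtain ⟨a', ha'⟩ := hpa
  obtain ⟨b', hb'⟩ := hpb
  have hpne : (p : ℤ) ≠ 0 := by exact_mod_cast hp.pos.ne'
  have hkey : (p : ℤ) * ((p : ℤ) * (a' * a' + b' * b')) = (p : ℤ) * 1 := by
    rw [ha', hb'] at hnorm
    linear_combination hnorm
  have h1 : (p : ℤ) ∣ 1 := ⟨_, (mul_left_cancel₀ hpne hkey).symm⟩
  have h2 : p ∣ 1 := by exact_mod_cast h1
  exact hp.one_lt.ne' (Nat.dvd_one.mp h2)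

lemma mk_norm (a b : ℤ) : (Zsqrtd.norm (⟨a, b⟩ : ℤ[i])) = a * a + b * b := by
  rw [Zsqrtd.norm]; ring

/-- main induction -/
lemma exists_rep : ∀ m : ℕ, 0 < m → m % 2 = 1 →
    (∀ p : ℕ, p.Prime → p ∣ m → p % 4 = 1) →
    ∃ α : ℤ[i], α.norm = (m : ℤ) ∧ ∀ q : ℕ, q.Prime → ¬ ((q : ℤ) : ℤ[i]) ∣ α := by
  intro m
  induction m using Nat.strong_induction_on with
  | _ m ih =>
    intro hm hmodd hyp
    rcases eq_or_lt_of_le (show 1 ≤ m from hm) with h1 | h1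
    · -- m = 1
      refine ⟨1, by rw [← h1]; simp, ?_⟩
      intro q hq hdvd
      have h2 : ((q : ℤ) : ℤ[i]).norm ∣ (1 : ℤ[i]).norm := gnorm_dvd hdvd
      rw [Zsqrtd.norm_intCast, Zsqrtd.norm_one] at h2
      have h3 : (q : ℤ) ∣ 1 := dvd_trans (dvd_mul_right _ _) h2
      have h4 : q ∣ 1 := by exact_mod_cast h3
      exact hq.one_lt.ne' (Nat.dvd_one.mp h4)
    · -- m > 1
      set p := m.minFac with hpdef
      have hp : p.Prime := Nat.minFac_prime (by omega)
      have hpm : p ∣ m := Nat.minFac_dvd m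
      have hp4 : p % 4 = 1 := hyp p hp hpm
      have hpodd : p % 2 = 1 := by
        rcases hp.eq_two_or_odd with h | h
        · exfalso; rw [h] at hpm; omega
        · exact h
      haveI : Fact p.Prime := ⟨hp⟩
      obtain ⟨a, b, hab⟩ := Nat.Prime.sq_add_sq (p := p) (by omega)
      set π : ℤ[i] := ⟨(a : ℤ), (b : ℤ)⟩ with hπdef
      have hπ : π.norm = (p : ℤ) := by
        rw [hπdef, mk_norm]
        have : ((a * a + b * b : ℕ) : ℤ) = ((p : ℕ) : ℤ) := by
          congr 1; rw [← hab]; ring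
        push_cast at this
        linarith [this]
      have hπ' : (star π).norm = (p : ℤ) := by rw [Zsqrtd.norm_conj, hπ]
      have hπprime : Prime π := gprime_of_norm_prime hp hπ
      have hπprime' : Prime (star π) := gprime_of_norm_prime hp hπ'
      have hnd : ¬ star π ∣ π := lemB hp hpodd hπ
      set e := m.factorization p with hedef
      set m' := m / p ^ e with hm'def
      have hme : p ^ e * m' = m := Nat.ordProj_mul_ordCompl_eq_self m p
      have hm'dvd : m' ∣ m := Nat.ordCompl_dvd m p
      have hpm' : ¬ p ∣ m' := Nat.not_dvd_ordCompl hp (by omega)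
      have hepos : 0 < e := hp.factorization_pos_of_dvd (by omega) hpm
      have hm'pos : 0 < m' := Nat.ordCompl_pos p (by omega)
      have hm'lt : m' < m := by
        have h2 : 2 ≤ p ^ e := by
          calc 2 ≤ p := hp.two_le
          _ ≤ p ^ e := Nat.le_self_pow (by omega) p
        nlinarith [hm'pos]
      have hm'odd : m' % 2 = 1 := by
        rcases Nat.even_or_odd m' with h | h
        · exfalso
          have h2 : 2 ∣ m := dvd_trans h.two_dvd hm'dvd
          omega
        · exact Nat.odd_iff.mp h
      obtain ⟨β, hβn, hβ⟩ := ih m' hm'lt hm'pos hm'odd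
        (fun q hq hqd => hyp q hq (hqd.trans hm'dvd))
      refine ⟨π ^ e * β, ?_, ?_⟩
      · have hpe : (π ^ e).norm = (p : ℤ) ^ e := by
          rw [show (π ^ e).norm = Zsqrtd.normMonoidHom (π ^ e) from rfl, map_pow]
          rw [show Zsqrtd.normMonoidHom π = π.norm from rfl, hπ]
        rw [Zsqrtd.norm_mul, hpe, hβn, ← hme]
        push_cast
        ring
      · intro q hq hdvd
        -- q ∣ m
        have hqm : q ∣ m := by
          have h2 : ((q : ℤ) : ℤ[i]).norm ∣ (π ^ e * β).norm := gnorm_dvd hdvd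
          rw [Zsqrtd.norm_intCast] at h2
          have hπen : (π ^ e).norm = (p : ℤ) ^ e := by
            rw [show (π ^ e).norm = Zsqrtd.normMonoidHom (π ^ e) from rfl, map_pow]
            rw [show Zsqrtd.normMonoidHom π = π.norm from rfl, hπ]
          rw [Zsqrtd.norm_mul, hπen, hβn] at h2
          have h3 : (q : ℤ) ∣ ((m : ℕ) : ℤ) := by
            have : ((p : ℤ) ^ e * (m' : ℤ)) = ((m : ℕ) : ℤ) := by
              rw [← hme]; push_cast; ring
            rw [this] at h2
            exact dvd_trans (dvd_mul_right _ _) h2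
          exact_mod_cast h3
        have hq4 : q % 4 = 1 := hyp q hq hqm
        have hqodd : q % 2 = 1 := by omega
        haveI : Fact q.Prime := ⟨hq⟩
        obtain ⟨c, d, hcd⟩ := Nat.Prime.sq_add_sq (p := q) (by omega)
        set ρ : ℤ[i] := ⟨(c : ℤ), (d : ℤ)⟩ with hρdef
        have hρn : ρ.norm = (q : ℤ) := by
          rw [hρdef, mk_norm]
          have : ((c * c + d * d : ℕ) : ℤ) = ((q : ℕ) : ℤ) := by
            congr 1; rw [← hcd]; ring
          push_cast at this
          linarith [this]
        have hρn' : (star ρ).norm = (q : ℤ) := by rw [Zsqrtd.norm_conj, hρn]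
        have hρprime : Prime ρ := gprime_of_norm_prime hq hρn
        have hρprime' : Prime (star ρ) := gprime_of_norm_prime hq hρn'
        have hnd2 : ¬ star ρ ∣ ρ := lemB hq hqodd hρn
        have hρq : ρ * star ρ = ((q : ℤ) : ℤ[i]) := by
          rw [← Zsqrtd.norm_eq_mul_conj, hρn]
        have hρα : ρ ∣ π ^ e * β := dvd_trans ⟨star ρ, hρq.symm⟩ hdvd
        have hρ'α : star ρ ∣ π ^ e * β := dvd_trans ⟨ρ, by rw [← hρq]; ring⟩ hdvd
        -- helper conclusions
        have key_pi : ∀ σ : ℤ[i], Prime σ → σ.norm = (q : ℤ) → σ ∣ π → q = p := by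
          intro σ hσ hσn hσπ
          have := gnorm_dvd hσπ
          rw [hσn, hπ] at this
          have h3 : q ∣ p := by exact_mod_cast this
          exact (Nat.prime_dvd_prime_iff_eq hq hp).mp h3
        have key_beta : ∀ σ : ℤ[i], σ.norm = (q : ℤ) → σ ∣ β → q ∣ m' := by
          intro σ hσn hσβ
          have := gnorm_dvd hσβ
          rw [hσn, hβn] at this
          exact_mod_cast this
        rcases hρprime.dvd_mul.mp hρα with h2 | h2 <;>
          rcases hρprime'.dvd_mul.mp hρ'α with h3 | h3
        · -- both divide π^e
          replace h2 : ρ ∣ π := hρprime.dvd_of_dvd_pow h2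
          replace h3 : star ρ ∣ π := hρprime'.dvd_of_dvd_pow h3
          obtain ⟨t, ht⟩ := h2
          have h4 : star ρ ∣ t := by
            rcases hρprime'.dvd_mul.mp (ht ▸ h3) with h' | h'
            · exact absurd h' hnd2
            · exact h'
          have h5 : ((q : ℤ) : ℤ[i]) ∣ π := by
            rw [← hρq, ht]
            exact mul_dvd_mul_left ρ h4
          have h6 := gnorm_dvd h5
          rw [Zsqrtd.norm_intCast, hπ] at h6
          have h7 : (q : ℕ) * q ∣ p := by exact_mod_cast h6
          have h8 : q ∣ p := dvd_trans (dvd_mul_right _ _) h7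
          have h9 : q = p := (Nat.prime_dvd_prime_iff_eq hq hp).mp h8
          rw [h9] at h7
          have := Nat.le_of_dvd hp.pos h7
          nlinarith [hp.two_le]
        · -- ρ ∣ π, star ρ ∣ β
          replace h2 : ρ ∣ π := hρprime.dvd_of_dvd_pow h2
          have h9 : q = p := key_pi ρ hρprime hρn h2
          have := key_beta (star ρ) hρn' h3
          rw [h9] at this
          exact hpm' this
        · -- ρ ∣ β, star ρ ∣ π
          replace h3 : star ρ ∣ π := hρprime'.dvd_of_dvd_pow h3
          have h9 : q = p := key_pi (star ρ) hρprime' hρn' h3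
          have := key_beta ρ hρn h2
          rw [h9] at this
          exact hpm' this
        · -- both divide β
          obtain ⟨t, ht⟩ := h2
          have h4 : star ρ ∣ t := by
            rcases hρprime'.dvd_mul.mp (ht ▸ h3) with h' | h'
            · exact absurd h' hnd2
            · exact h'
          have h5 : ((q : ℤ) : ℤ[i]) ∣ β := by
            rw [← hρq, ht]
            exact mul_dvd_mul_left ρ h4
          exact hβ q hq h5





lemma cop_two {d : ℕ} (h : d % 2 = 1) : Nat.Coprime d 2 :=
  (Nat.Prime.coprime_iff_not_dvd Nat.prime_two |>.mpr (by omega)).symm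

lemma exists_coprime_rep (m : ℕ) (hm : 0 < m) (hmodd : m % 2 = 1)
    (hyp : ∀ p : ℕ, p.Prime → p ∣ m → p % 4 = 1) :
    ∃ u v : ℕ, Nat.gcd u v = 1 ∧ u ^ 2 + v ^ 2 = m := by
  obtain ⟨α, hαn, hα⟩ := exists_rep m hm hmodd hyp
  refine ⟨α.re.natAbs, α.im.natAbs, ?_, ?_⟩
  · by_contra hg
    set g := Nat.gcd α.re.natAbs α.im.natAbs with hgdef
    have hq := Nat.minFac_prime hg
    have hqre : (g.minFac : ℤ) ∣ α.re := by
      have h1 : g.minFac ∣ α.re.natAbs := (Nat.minFac_dvd g).trans (Nat.gcd_dvd_left _ _)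
      exact Int.natCast_dvd.mpr h1
    have hqim : (g.minFac : ℤ) ∣ α.im := by
      have h1 : g.minFac ∣ α.im.natAbs := (Nat.minFac_dvd g).trans (Nat.gcd_dvd_right _ _)
      exact Int.natCast_dvd.mpr h1
    exact hα g.minFac hq ((Zsqrtd.intCast_dvd _ _).mpr ⟨hqre, hqim⟩)
  · have h1 : (α.re * α.re + α.im * α.im : ℤ) = (m : ℤ) := by
      rw [← hαn, Zsqrtd.norm]; ring
    have h2 : ((α.re.natAbs : ℤ)) ^ 2 + ((α.im.natAbs : ℤ)) ^ 2 = (m : ℤ) := by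
      rw [Int.natAbs_sq, Int.natAbs_sq]
      rw [← h1]; ring
    exact_mod_cast h2

lemma triple (m u v : ℕ) (hm : m % 2 = 1) (huv : Nat.gcd u v = 1) (h : u ^ 2 + v ^ 2 = m) :
    ∃ x y : ℕ, x ^ 2 + y ^ 2 = m ^ 2 ∧ Nat.gcd (Nat.gcd x y) m = 1 := by
  refine ⟨((u : ℤ) ^ 2 - (v : ℤ) ^ 2).natAbs, 2 * u * v, ?_, ?_⟩
  · have key : ((((u : ℤ) ^ 2 - (v : ℤ) ^ 2).natAbs : ℤ)) ^ 2 + ((2 * u * v : ℕ) : ℤ) ^ 2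
        = ((m : ℕ) : ℤ) ^ 2 := by
      rw [Int.natAbs_sq]
      have hm' : ((m : ℕ) : ℤ) = (u : ℤ) ^ 2 + (v : ℤ) ^ 2 := by exact_mod_cast h.symm
      rw [hm']
      push_cast
      ring
    exact_mod_cast key
  · by_contra hg
    set x := ((u : ℤ) ^ 2 - (v : ℤ) ^ 2).natAbs with hxdef
    set y := 2 * u * v with hydef
    set g := Nat.gcd (Nat.gcd x y) m with hgdef
    have hq := Nat.minFac_prime hg
    set q := g.minFac with hqdef
    have hqx : q ∣ x := (Nat.minFac_dvd g).trans ((Nat.gcd_dvd_left _ _).trans (Nat.gcd_dvd_left _ _))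
    have hqy : q ∣ y := (Nat.minFac_dvd g).trans ((Nat.gcd_dvd_left _ _).trans (Nat.gcd_dvd_right _ _))
    have hqm : q ∣ m := (Nat.minFac_dvd g).trans (Nat.gcd_dvd_right _ _)
    have hqodd : q ≠ 2 := by
      intro he
      have h2 : 2 ∣ m := he ▸ hqm
      omega
    have hqodd2 : q % 2 = 1 := by
      rcases hq.eq_two_or_odd with h' | h'
      · exact absurd h' hqodd
      · exact h'
    have hquv : q ∣ u * v := by
      apply Nat.Coprime.dvd_of_dvd_mul_left (cop_two hqodd2)
      have h0 : 2 * (u * v) = y := by rw [hydef]; ring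
      rw [h0]
      exact hqy
    have huorv := (Nat.Prime.dvd_mul hq).mp hquv
    have hqu : q ∣ u ∧ q ∣ v := by
      rcases huorv with h' | h'
      · refine ⟨h', ?_⟩
        have h2 : q ∣ u ^ 2 := Dvd.dvd.pow h' (by norm_num)
        have h3 : q ∣ v ^ 2 := by
          have := Nat.dvd_sub (h ▸ hqm) h2
          simpa using this
        exact hq.dvd_of_dvd_pow h3
      · refine ⟨?_, h'⟩
        have h2 : q ∣ v ^ 2 := Dvd.dvd.pow h' (by norm_num)
        have h3 : q ∣ u ^ 2 := by
          have := Nat.dvd_sub (h ▸ hqm) h2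
          simpa using this
        exact hq.dvd_of_dvd_pow h3
    have : q ∣ Nat.gcd u v := Nat.dvd_gcd hqu.1 hqu.2
    rw [huv] at this
    exact hq.one_lt.ne' (Nat.dvd_one.mp this)


theorem stmt11 (n : ℕ) (hn : 0 < n) :
    (∀ d : ℕ, d ∣ n → d % 4 ≠ 3) ↔
      (∃ (k x y z : ℕ), x ^ 2 + y ^ 2 = z ^ 2 ∧ Nat.gcd (Nat.gcd x y) z = 1 ∧
        n = 2 ^ k * z) := by
  constructor
  · intro hd
    set k := n.factorization 2 with hkdef
    set m := n / 2 ^ k with hmdef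
    have hme : 2 ^ k * m = n := Nat.ordProj_mul_ordCompl_eq_self n 2
    have hmdvd : m ∣ n := Nat.ordCompl_dvd n 2
    have h2m : ¬ 2 ∣ m := Nat.not_dvd_ordCompl Nat.prime_two (by omega)
    have hmpos : 0 < m := Nat.ordCompl_pos 2 (by omega)
    have hmodd : m % 2 = 1 := by omega
    have hyp : ∀ p : ℕ, p.Prime → p ∣ m → p % 4 = 1 := by
      intro p hp hpm
      have h1 : p % 4 ≠ 3 := hd p (hpm.trans hmdvd)
      have h2 : p ≠ 2 := by rintro rfl; exact h2m hpm
      have h3 : p % 2 = 1 := by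
        rcases hp.eq_two_or_odd with h' | h'
        · exact absurd h' h2
        · exact h'
      have := Nat.mod_mod_of_dvd p (by norm_num : 2 ∣ 4)
      omega
    obtain ⟨u, v, huv, huvm⟩ := exists_coprime_rep m hmpos hmodd hyp
    obtain ⟨x, y, hxy, hgcd⟩ := triple m u v hmodd huv huvm
    exact ⟨k, x, y, m, hxy, hgcd, hme.symm⟩
  · rintro ⟨k, x, y, z, hxyz, hgcd, rfl⟩ d hdn hd4
    have hdodd : d % 2 = 1 := by omega
    have hdz : d ∣ z := by
      refine (Nat.Coprime.dvd_of_dvd_mul_left ?_ hdn)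
      exact Nat.Coprime.pow_right k (cop_two hdodd)
    obtain ⟨p, hp, hpd, hp4⟩ := lemE d hd4
    have hpz : p ∣ z := hpd.trans hdz
    have hpxy : p ∣ x ^ 2 + y ^ 2 := hxyz ▸ (hpz.trans (dvd_pow_self z (by norm_num))).trans dvd_rfl
    obtain ⟨hpx, hpy⟩ := lemF hp hp4 hpxy
    have : p ∣ Nat.gcd (Nat.gcd x y) z := Nat.dvd_gcd (Nat.dvd_gcd hpx hpy) hpz
    rw [hgcd] at this
    exact hp.one_lt.ne' (Nat.dvd_one.mp this)
end

section
/- Define γ(n,i) = γ⁺(n,i) − γ⁻(n,i) where γ⁺(n,i) counts divisors k of 2n with k(k + 2i + (-1)^(n+k+i))/2 = n and γ⁻(n,i) counts divisors k of 2n with k(k + 2i − (-1)^(n+k+i))/2 = n. Then all γ(n,i) for 0 ≤ i ≤ n are non-negative if and only if n = 2^k · z for some k ≥ 0 and some primitive Pythagorean triple (x, y, z). -/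
lemma neg_one_pow_cases (m : ℕ) :
    ((-1:ℤ)^m = 1 ∧ m % 2 = 0) ∨ ((-1:ℤ)^m = -1 ∧ m % 2 = 1) := by
  rcases Nat.even_or_odd m with h | h
  · exact Or.inl ⟨h.neg_one_pow, Nat.even_iff.mp h⟩
  · exact Or.inr ⟨h.neg_one_pow, Nat.odd_iff.mp h⟩

/-- Any member of the γ⁻ filter yields a divisor of `n` congruent to 3 mod 4. -/
lemma lemA {n i k : ℕ} (hn : 0 < n) (hk : 0 < k) (hkd : k ∣ 2 * n)
    (heq : (k:ℤ) * ((k:ℤ) + 2*i - (-1:ℤ)^(n+k+i)) = 2*n) :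
    ∃ d, d ∣ n ∧ d % 4 = 3 := by
  rcases Nat.even_or_odd k with hke | hko
  · -- k even, k = 2g; d := the odd cofactor
    obtain ⟨g, hg⟩ : ∃ g, k = 2 * g := ⟨k / 2, by have := Nat.even_iff.mp hke; omega⟩
    have hg0 : 0 < g := by omega
    set X : ℤ := (k:ℤ) + 2*i - (-1:ℤ)^(n+k+i) with hX
    have heq' : (2:ℤ) * ((g:ℤ) * X) = 2 * n := by
      rw [← heq]; push_cast [hg]; ring
    have hgX : (g:ℤ) * X = n := mul_left_cancel₀ (by norm_num) heq'
    have hXpos : 0 < X := by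
      by_contra hc
      push_neg at hc
      have : (g:ℤ) * X ≤ 0 := mul_nonpos_of_nonneg_of_nonpos (by positivity) hc
      omega
    set d : ℕ := X.toNat with hd
    have hdX : (d:ℤ) = X := Int.toNat_of_nonneg (le_of_lt hXpos)
    have hgd : g * d = n := by
      have : ((g * d : ℕ) : ℤ) = (n:ℤ) := by push_cast; rw [hdX]; exact hgX
      exact_mod_cast this
    have hddvd : d ∣ n := Dvd.intro_left g hgd
    -- parity of d
    rcases neg_one_pow_cases (n+k+i) with ⟨he, hm⟩ | ⟨he, hm⟩ <;>
      rw [he] at hX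
    · -- ε = 1 : d = k + 2i - 1
      have hdodd : d % 2 = 1 := by omega
      have hpar : n % 2 = g % 2 := by
        have h2 := Nat.mul_mod g d 2
        rw [hdodd] at h2
        omega
      exact ⟨d, hddvd, by omega⟩
    · have hdodd : d % 2 = 1 := by omega
      have hpar : n % 2 = g % 2 := by
        have h2 := Nat.mul_mod g d 2
        rw [hdodd] at h2
        omega
      exact ⟨d, hddvd, by omega⟩
  · -- k odd ⟹ k ∣ n
    have hkodd : k % 2 = 1 := Nat.odd_iff.mp hko
    have hkn : k ∣ n := by
      refine (Nat.Coprime.dvd_of_dvd_mul_left ?_ hkd)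
      have : ¬ (2 ∣ k) := by omega
      exact Nat.coprime_comm.mp (Nat.Prime.coprime_iff_not_dvd Nat.prime_two |>.mpr this)
    obtain ⟨f, hf⟩ := hkn
    have hk0 : ((k:ℤ)) ≠ 0 := by positivity
    have hX : (k:ℤ) + 2*i - (-1:ℤ)^(n+k+i) = 2*f := by
      refine mul_left_cancel₀ hk0 ?_
      rw [heq, hf]; push_cast; ring
    have hpar : n % 2 = f % 2 := by
      have h2 := Nat.mul_mod k f 2
      rw [hkodd] at h2
      omega
    rcases neg_one_pow_cases (n+k+i) with ⟨he, hm⟩ | ⟨he, hm⟩ <;> rw [he] at hX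
    · exact ⟨k, ⟨f, hf⟩, by omega⟩
    · exact ⟨k, ⟨f, hf⟩, by omega⟩



lemma no_adjacent {n t a b : ℤ} (hn : 1 ≤ n) (ht : 1 ≤ t) (ht2 : t % 2 = 1)
    (ha2 : a % 2 = 1) (hb2 : b % 2 = 1) (ha1 : 1 ≤ a) (hb1 : 1 ≤ b)
    (hA : a^2 = t^2 + 8*n) (hB : b^2 = (t+2)^2 + 8*n) : False := by
  have hat : t < a := by nlinarith [sq_nonneg (a - t), sq_nonneg (a + t)]
  have hat2 : t + 2 ≤ a := by omega
  have hba : a < b := by nlinarith [sq_nonneg (b - a), sq_nonneg (b + a)]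
  have hba2 : a + 2 ≤ b := by omega
  have hkey : (b - a) * (b + a) = 4*t + 4 := by linear_combination hB - hA
  have h1 : 2 * (b + a) ≤ (b - a) * (b + a) :=
    mul_le_mul_of_nonneg_right (by omega) (by omega)
  linarith

/-- The γ⁺ filter and γ⁻ filter can never be simultaneously nonempty. -/
lemma lemB_s12 {n i k k' : ℕ} (hn : 0 < n) (hk : 0 < k) (hk' : 0 < k')
    (h1 : (k:ℤ) * ((k:ℤ) + 2*i + (-1:ℤ)^(n+k+i)) = 2*n)
    (h2 : (k':ℤ) * ((k':ℤ) + 2*i - (-1:ℤ)^(n+k'+i)) = 2*n) : False := by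
  rcases neg_one_pow_cases (n+k+i) with ⟨he, hm⟩ | ⟨he, hm⟩ <;>
    rcases neg_one_pow_cases (n+k'+i) with ⟨he', hm'⟩ | ⟨he', hm'⟩ <;>
      rw [he] at h1 <;> rw [he'] at h2
  · -- ε = 1, ε' = 1 : "adjacent" configuration
    have hs : (2*(k:ℤ)+2*i+1)^2 = (2*(i:ℤ)+1)^2 + 8*n := by linear_combination 4*h1
    have hs' : (2*(k':ℤ)+2*i-1)^2 = (2*(i:ℤ)-1)^2 + 8*n := by linear_combination 4*h2
    rcases Nat.eq_zero_or_pos i with hi0 | hi1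
    · subst hi0
      have hss : ((2*(k:ℤ)+1) - (2*(k':ℤ)-1)) * ((2*(k:ℤ)+1) + (2*(k':ℤ)-1)) = 0 := by
        push_cast at hs hs' ⊢
        linear_combination hs - hs'
      rcases mul_eq_zero.mp hss with h0 | h0
      · omega
      · omega
    · refine no_adjacent (n := (n:ℤ)) (t := 2*(i:ℤ)-1) (a := 2*(k':ℤ)+2*i-1) (b := 2*(k:ℤ)+2*i+1)
        (by exact_mod_cast hn) (by omega) (by omega) (by omega) (by omega)
        (by omega) (by omega) (by linear_combination hs') (by linear_combination hs)
  · -- ε = 1, ε' = -1 : same center, s = s'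
    have hs : (2*(k:ℤ)+2*i+1)^2 = (2*(i:ℤ)+1)^2 + 8*n := by linear_combination 4*h1
    have hs' : (2*(k':ℤ)+2*i+1)^2 = (2*(i:ℤ)+1)^2 + 8*n := by linear_combination 4*h2
    have hss : ((2*(k:ℤ)+2*i+1) - (2*(k':ℤ)+2*i+1)) * ((2*(k:ℤ)+2*i+1) + (2*(k':ℤ)+2*i+1)) = 0 := by
      linear_combination hs - hs'
    rcases mul_eq_zero.mp hss with h0 | h0
    · omega
    · omega
  · -- ε = -1, ε' = 1 : same center
    have hs : (2*(k:ℤ)+2*i-1)^2 = (2*(i:ℤ)-1)^2 + 8*n := by linear_combination 4*h1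
    have hs' : (2*(k':ℤ)+2*i-1)^2 = (2*(i:ℤ)-1)^2 + 8*n := by linear_combination 4*h2
    have hss : ((2*(k:ℤ)+2*i-1) - (2*(k':ℤ)+2*i-1)) * ((2*(k:ℤ)+2*i-1) + (2*(k':ℤ)+2*i-1)) = 0 := by
      linear_combination hs - hs'
    rcases mul_eq_zero.mp hss with h0 | h0
    · omega
    · omega
  · -- ε = -1, ε' = -1 : adjacent configuration, roles swapped
    have hs : (2*(k:ℤ)+2*i-1)^2 = (2*(i:ℤ)-1)^2 + 8*n := by linear_combination 4*h1
    have hs' : (2*(k':ℤ)+2*i+1)^2 = (2*(i:ℤ)+1)^2 + 8*n := by linear_combination 4*h2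
    rcases Nat.eq_zero_or_pos i with hi0 | hi1
    · subst hi0
      have hss : ((2*(k':ℤ)+1) - (2*(k:ℤ)-1)) * ((2*(k':ℤ)+1) + (2*(k:ℤ)-1)) = 0 := by
        push_cast at hs hs' ⊢
        linear_combination hs' - hs
      rcases mul_eq_zero.mp hss with h0 | h0
      · omega
      · omega
    · refine no_adjacent (n := (n:ℤ)) (t := 2*(i:ℤ)-1) (a := 2*(k:ℤ)+2*i-1) (b := 2*(k':ℤ)+2*i+1)
        (by exact_mod_cast hn) (by omega) (by omega) (by omega) (by omega)
        (by omega) (by omega) (by linear_combination hs) (by linear_combination hs')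


/-- If `d ∣ n` with `d ≡ 3 (mod 4)` then some `i ≤ n` has a member in the γ⁻ filter. -/
lemma witness3 {n d : ℕ} (hn : 0 < n) (hd : d ∣ n) (hd4 : d % 4 = 3) :
    ∃ i, i ≤ n ∧ ∃ k', k' ∣ 2 * n ∧ 0 < k' ∧
      (k':ℤ) * ((k':ℤ) + 2*i - (-1:ℤ)^(n+k'+i)) = 2*n := by
  obtain ⟨f, hf⟩ := hd
  have hdodd : d % 2 = 1 := by omega
  have hd0 : 0 < d := by omega
  have hf0 : 0 < f := by
    rcases Nat.eq_zero_or_pos f with h | h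
    · subst h; simp at hf; omega
    · exact h
  have hfn : f ≤ n := Nat.le_of_dvd hn ⟨d, by rw [hf]; ring⟩
  have hdn : d ≤ n := Nat.le_of_dvd hn ⟨f, hf⟩
  have hncast : (n:ℤ) = (d:ℤ) * f := by exact_mod_cast hf
  rcases le_or_gt (d+1) (2*f) with hcase | hcase
  · -- i = f - (d+1)/2, k' = d
    set i := f - (d+1)/2 with hi
    have h2i : 2*i + d + 1 = 2*f := by omega
    have hpodd : (n + d + i) % 2 = 1 := by
      have hexp : (d+1)*(f+1) = d*f + d + f + 1 := by ring
      have heven : (d+1)*(f+1) % 2 = 0 := by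
        have h1 : (d+1) % 2 = 0 := by omega
        have h2 := Nat.mul_mod (d+1) (f+1) 2
        rw [h1] at h2
        omega
      omega
    have hpow : (-1:ℤ)^(n+d+i) = -1 := Odd.neg_one_pow (Nat.odd_iff.mpr hpodd)
    refine ⟨i, by omega, d, dvd_mul_of_dvd_right ⟨f, hf⟩ 2, hd0, ?_⟩
    rw [hpow]
    have hcast : (2*(i:ℤ) + d + 1) = 2*(f:ℤ) := by exact_mod_cast congrArg (Nat.cast (R := ℤ)) h2i
    linear_combination (d:ℤ) * hcast - 2 * hncast
  · -- 2f < d+1, and d odd so 2f + 1 ≤ d; i = (d-2f-1)/2, k' = 2f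
    have hcase' : 2*f + 1 ≤ d := by
      -- d ≠ 2f by parity
      omega
    set i := (d - 2*f - 1)/2 with hi
    have h2i : 2*i + 2*f + 1 = d := by omega
    have hpodd : (n + 2*f + i) % 2 = 1 := by
      have hexp : (d+1)*f = d*f + f := by ring
      have heven : (d+1)*f % 2 = 0 := by
        have h1 : (d+1) % 2 = 0 := by omega
        have h2 := Nat.mul_mod (d+1) f 2
        rw [h1] at h2
        omega
      omega
    have hpow : (-1:ℤ)^(n+2*f+i) = -1 := Odd.neg_one_pow (Nat.odd_iff.mpr hpodd)
    refine ⟨i, by omega, 2*f, mul_dvd_mul_left 2 ⟨d, by rw [hf]; ring⟩, by omega, ?_⟩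
    push_cast
    rw [hpow]
    have hcast : (2*(i:ℤ) + 2*f + 1) = (d:ℤ) := by exact_mod_cast congrArg (Nat.cast (R := ℤ)) h2i
    linear_combination 2 * (f:ℤ) * hcast - 2 * hncast


lemma gcd_one_of_primes {X Y : ℤ} (h0 : ¬(X = 0 ∧ Y = 0))
    (h : ∀ q : ℕ, q.Prime → (q:ℤ) ∣ X → (q:ℤ) ∣ Y → False) : Int.gcd X Y = 1 := by
  by_contra hne
  have hg0 : Int.gcd X Y ≠ 0 := by
    intro hgz
    exact h0 (Int.gcd_eq_zero_iff.mp hgz)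
  have hq := Nat.minFac_prime (show Int.gcd X Y ≠ 1 from hne)
  have hdX : ((Int.gcd X Y).minFac : ℤ) ∣ X :=
    dvd_trans (Int.natCast_dvd_natCast.mpr (Nat.minFac_dvd _)) (Int.gcd_dvd_left _ _)
  have hdY : ((Int.gcd X Y).minFac : ℤ) ∣ Y :=
    dvd_trans (Int.natCast_dvd_natCast.mpr (Nat.minFac_dvd _)) (Int.gcd_dvd_right _ _)
  exact h _ hq hdX hdY

lemma pair_gcd {p : ℕ} (hp : p.Prime) {x y u v X Y : ℤ} (hg : Int.gcd x y = 1)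
    (h0 : ¬(X = 0 ∧ Y = 0))
    (e1 : u*X + v*Y = x*(p:ℤ)^2)
    (e2 : u*Y - v*X = y*(p:ℤ)^2 ∨ u*Y - v*X = -(y*(p:ℤ)^2))
    (hpXY : ¬((p:ℤ) ∣ X ∧ (p:ℤ) ∣ Y)) : Int.gcd X Y = 1 := by
  apply gcd_one_of_primes h0
  intro q hq hqX hqY
  by_cases hqp : q = p
  · subst hqp; exact hpXY ⟨hqX, hqY⟩
  · have hqq : Prime (q:ℤ) := Nat.prime_iff_prime_int.mp hq
    have h1 : (q:ℤ) ∣ x*(p:ℤ)^2 := e1 ▸ dvd_add (Dvd.dvd.mul_left hqX u) (Dvd.dvd.mul_left hqY v)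
    have h2 : (q:ℤ) ∣ y*(p:ℤ)^2 := by
      have hd : (q:ℤ) ∣ u*Y - v*X := dvd_sub (Dvd.dvd.mul_left hqY u) (Dvd.dvd.mul_left hqX v)
      rcases e2 with e2 | e2 <;> rw [e2] at hd
      · exact hd
      · exact dvd_neg.mp hd
    have hqnp : ¬ (q:ℤ) ∣ (p:ℤ)^2 := by
      intro h
      have h' : q ∣ p^2 := by exact_mod_cast h
      exact hqp ((Nat.prime_dvd_prime_iff_eq hq hp).mp (hq.dvd_of_dvd_pow h'))
    have hqx : (q:ℤ) ∣ x := (hqq.dvd_mul.mp h1).resolve_right hqnp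
    have hqy : (q:ℤ) ∣ y := (hqq.dvd_mul.mp h2).resolve_right hqnp
    have hd1 : (q:ℤ) ∣ (1:ℤ) := by
      have := Int.dvd_coe_gcd hqx hqy
      rwa [hg, Nat.cast_one] at this
    have := Int.le_of_dvd one_pos hd1
    have := hq.two_le
    omega

/-- Composition step: multiply a primitive hypotenuse by a prime ≡ 1 mod 4. -/
lemma hyp_mul {p z : ℕ} (hp : p.Prime) (hp4 : p % 4 = 1) (hz0 : 0 < z)
    (hz : ∃ x y : ℤ, x^2 + y^2 = (z:ℤ)^2 ∧ Int.gcd x y = 1) :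
    ∃ x y : ℤ, x^2 + y^2 = ((p:ℤ) * z)^2 ∧ Int.gcd x y = 1 := by
  haveI : Fact p.Prime := ⟨hp⟩
  obtain ⟨a, b, hab⟩ := Nat.Prime.sq_add_sq (p := p) (by omega)
  obtain ⟨x, y, hxy, hg⟩ := hz
  have hpp : Prime (p:ℤ) := Nat.prime_iff_prime_int.mp hp
  have hp5 : 5 ≤ p := by have := hp.two_le; omega
  have habz : (a:ℤ)^2 + (b:ℤ)^2 = (p:ℤ) := by exact_mod_cast hab
  set A : ℤ := (a:ℤ) with hA
  set B : ℤ := (b:ℤ) with hB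
  have hpnot2 : ¬ (p:ℤ) ∣ 2 := fun h => by
    have := Int.le_of_dvd (by norm_num) h
    omega
  have hnotboth : ¬ ((p:ℤ) ∣ A ∧ (p:ℤ) ∣ B) := by
    rintro ⟨h1, h2⟩
    have hA2 : (p:ℤ)^2 ∣ A^2 := pow_dvd_pow_of_dvd h1 2
    have hB2 : (p:ℤ)^2 ∣ B^2 := pow_dvd_pow_of_dvd h2 2
    have hdp : (p:ℤ)^2 ∣ (p:ℤ) := by
      have hd' : (p:ℤ)^2 ∣ A^2 + B^2 := dvd_add hA2 hB2
      rwa [habz] at hd'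
    have h3 := Int.le_of_dvd (by exact_mod_cast hp.pos) hdp
    nlinarith [hp.two_le]
  have hpA : ¬ (p:ℤ) ∣ A := by
    intro h
    have hA2 : (p:ℤ) ∣ A^2 := dvd_pow h two_ne_zero
    have hB2 : (p:ℤ) ∣ B^2 := by
      have hBe : B^2 = (p:ℤ) - A^2 := by linarith [habz]
      rw [hBe]; exact dvd_sub (dvd_refl _) hA2
    exact hnotboth ⟨h, hpp.dvd_of_dvd_pow hB2⟩
  have hpB : ¬ (p:ℤ) ∣ B := by
    intro h
    have hB2 : (p:ℤ) ∣ B^2 := dvd_pow h two_ne_zero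
    have hA2 : (p:ℤ) ∣ A^2 := by
      have hAe : A^2 = (p:ℤ) - B^2 := by linarith [habz]
      rw [hAe]; exact dvd_sub (dvd_refl _) hB2
    exact hnotboth ⟨hpp.dvd_of_dvd_pow hA2, h⟩
  set u : ℤ := A^2 - B^2 with hu
  set v : ℤ := 2*A*B with hv
  have huv : u^2 + v^2 = (p:ℤ)^2 := by
    rw [hu, hv]; linear_combination (A^2 + B^2 + (p:ℤ)) * habz
  have hpu : ¬ (p:ℤ) ∣ u := by
    intro h
    have h2 : (p:ℤ) ∣ 2*A^2 := by
      have he : 2*A^2 = u + (A^2 + B^2) := by rw [hu]; ring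
      rw [he, habz]
      exact dvd_add h (dvd_refl _)
    rcases hpp.dvd_mul.mp h2 with h' | h'
    · exact hpnot2 h'
    · exact hpA (hpp.dvd_of_dvd_pow h')
  have hpv : ¬ (p:ℤ) ∣ v := by
    intro h
    rcases hpp.dvd_mul.mp h with h' | h'
    · rcases hpp.dvd_mul.mp h' with h'' | h''
      · exact hpnot2 h''
      · exact hpA h''
    · exact hpB h'
  have hpz0 : ((p:ℤ) * z) ≠ 0 := by
    have : (0:ℤ) < (p:ℤ) * z := by positivity
    omega
  -- the two candidate pairs
  have hS1 : (x*u - y*v)^2 + (x*v + y*u)^2 = ((p:ℤ)*z)^2 := by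
    linear_combination (u^2 + v^2) * hxy + (z:ℤ)^2 * huv
  have hS2 : (x*u + y*v)^2 + (x*v - y*u)^2 = ((p:ℤ)*z)^2 := by
    linear_combination (u^2 + v^2) * hxy + (z:ℤ)^2 * huv
  have hzero : ∀ {X Y : ℤ}, X^2 + Y^2 = ((p:ℤ)*z)^2 → ¬(X = 0 ∧ Y = 0) := by
    rintro X Y hS ⟨rfl, rfl⟩
    simp at hS
    exact hpz0 (pow_eq_zero_iff two_ne_zero |>.mp hS.symm)
  by_cases hc : (p:ℤ) ∣ (x*u - y*v) ∧ (p:ℤ) ∣ (x*v + y*u)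
  · -- use pair 2
    have hnc2 : ¬((p:ℤ) ∣ (x*u + y*v) ∧ (p:ℤ) ∣ (x*v - y*u)) := by
      rintro ⟨h2X, h2Y⟩
      obtain ⟨h1X, h1Y⟩ := hc
      have d1 : (p:ℤ) ∣ 2*x*u := by
        have he : 2*x*u = (x*u - y*v) + (x*u + y*v) := by ring
        rw [he]; exact dvd_add h1X h2X
      have d2 : (p:ℤ) ∣ 2*y*u := by
        have he : 2*y*u = (x*v + y*u) - (x*v - y*u) := by ring
        rw [he]; exact dvd_sub h1Y h2Y
      have hpx : (p:ℤ) ∣ x := by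
        rcases hpp.dvd_mul.mp d1 with h' | h'
        · rcases hpp.dvd_mul.mp h' with h'' | h''
          · exact absurd h'' hpnot2
          · exact h''
        · exact absurd h' hpu
      have hpy : (p:ℤ) ∣ y := by
        rcases hpp.dvd_mul.mp d2 with h' | h'
        · rcases hpp.dvd_mul.mp h' with h'' | h''
          · exact absurd h'' hpnot2
          · exact h''
        · exact absurd h' hpu
      have hd1 : (p:ℤ) ∣ (1:ℤ) := by
        have := Int.dvd_coe_gcd hpx hpy
        rwa [hg, Nat.cast_one] at this
      have := Int.le_of_dvd one_pos hd1
      omega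
    refine ⟨x*u + y*v, x*v - y*u, hS2, pair_gcd (u := u) (v := v) hp hg (hzero hS2) ?_ (Or.inr ?_) hnc2⟩
    · linear_combination x * huv
    · linear_combination (-y) * huv
  · refine ⟨x*u - y*v, x*v + y*u, hS1, pair_gcd (u := u) (v := v) hp hg (hzero hS1) ?_ (Or.inl ?_) hc⟩
    · linear_combination x * huv
    · linear_combination y * huv

/-- Every odd number with all prime factors ≡ 1 mod 4 is a primitive hypotenuse. -/
lemma hyp_exists : ∀ z : ℕ, 0 < z → z % 2 = 1 → (∀ d, d ∣ z → d % 4 ≠ 3) →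
    ∃ x y : ℕ, x^2 + y^2 = z^2 ∧ Nat.gcd x y = 1 := by
  intro z
  induction z using Nat.strong_induction_on with
  | _ z ih =>
    intro hz0 hz2 hQ
    by_cases hz1 : z = 1
    · exact ⟨0, 1, by simp [hz1], by simp⟩
    · set p := z.minFac with hp
      have hpp := Nat.minFac_prime hz1
      have hpd : p ∣ z := Nat.minFac_dvd z
      have hpodd : p % 2 = 1 := by
        rcases hpp.eq_two_or_odd with h | h
        · exfalso
          have : (2:ℕ) ∣ z := h ▸ hpd
          omega
        · exact h
      have hp43 : p % 4 ≠ 3 := hQ p hpd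
      have hp41 : p % 4 = 1 := by omega
      obtain ⟨z', hz'⟩ := hpd
      have hp2 := hpp.two_le
      have hz'0 : 0 < z' := by
        rcases Nat.eq_zero_or_pos z' with h | h
        · subst h; simp at hz'; omega
        · exact h
      have hz'lt : z' < z := by
        rw [hz']
        nlinarith
      have hz'2 : z' % 2 = 1 := by
        have h2 := Nat.mul_mod p z' 2
        rw [← hz', hpodd] at h2
        omega
      have hQ' : ∀ d, d ∣ z' → d % 4 ≠ 3 := fun d hd => hQ d (hd.trans ⟨p, by rw [hz']; ring⟩)
      obtain ⟨x', y', hsum', hgcd'⟩ := ih z' hz'lt hz'0 hz'2 hQ'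
      have hzint : ∃ x y : ℤ, x^2 + y^2 = ((z':ℕ):ℤ)^2 ∧ Int.gcd x y = 1 := by
        refine ⟨(x':ℤ), (y':ℤ), by exact_mod_cast hsum', ?_⟩
        rw [Int.gcd_natCast_natCast]
        exact hgcd'
      obtain ⟨X, Y, hS, hG⟩ := hyp_mul hpp hp41 hz'0 hzint
      rw [← hp] at hS
      refine ⟨X.natAbs, Y.natAbs, ?_, hG⟩
      have hfin : ((X.natAbs:ℤ))^2 + ((Y.natAbs:ℤ))^2 = ((z:ℕ):ℤ)^2 := by
        rw [Int.natAbs_sq X, Int.natAbs_sq Y, hS, hz']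
        push_cast
        ring
      exact_mod_cast hfin

/-- extraction of the odd part -/
lemma odd_part : ∀ n : ℕ, 0 < n → ∃ k z, z % 2 = 1 ∧ n = 2^k * z := by
  intro n
  induction n using Nat.strong_induction_on with
  | _ n ih =>
    intro hn
    rcases Nat.even_or_odd n with he | ho
    · obtain ⟨m, hm⟩ := he
      have hm0 : 0 < m := by omega
      obtain ⟨k, z, hz, hmz⟩ := ih m (by omega) hm0
      exact ⟨k+1, z, hz, by rw [pow_succ]; rw [hmz] at hm; rw [hm]; ring⟩
    · exact ⟨0, n, Nat.odd_iff.mp ho, by simp⟩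

/-- every number ≡ 3 mod 4 has a prime factor ≡ 3 mod 4 -/
lemma exists_prime_3mod4 : ∀ d : ℕ, d % 4 = 3 → ∃ p, p.Prime ∧ p ∣ d ∧ p % 4 = 3 := by
  intro d
  induction d using Nat.strong_induction_on with
  | _ d ih =>
    intro hd
    have hd1 : d ≠ 1 := by omega
    have hp := Nat.minFac_prime hd1
    set p := d.minFac with hpdef
    have hpd : p ∣ d := Nat.minFac_dvd d
    by_cases hp4 : p % 4 = 3
    · exact ⟨p, hp, hpd, hp4⟩
    · have hpodd : p % 2 = 1 := by
        rcases hp.eq_two_or_odd with h | h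
        · exfalso
          have h2 : (2:ℕ) ∣ d := h ▸ hpd
          omega
        · exact h
      have hp41 : p % 4 = 1 := by omega
      obtain ⟨e, he⟩ := hpd
      have he0 : 0 < e := by
        rcases Nat.eq_zero_or_pos e with h | h
        · subst h; simp at he; omega
        · exact h
      have helt : e < d := by
        have := hp.two_le
        rw [he]; nlinarith
      have he4 : e % 4 = 3 := by
        have h2 := Nat.mul_mod p e 4
        rw [hp41, ← he] at h2
        omega
      obtain ⟨q, hq, hqe, hq4⟩ := ih e helt he4
      exact ⟨q, hq, hqe.trans ⟨p, by rw [he]; ring⟩, hq4⟩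

/-- RHS implies no divisor ≡ 3 mod 4 -/
lemma rhs_to_Q {n : ℕ} (hn : 0 < n)
    (h : ∃ (k x y z : ℕ), x ^ 2 + y ^ 2 = z ^ 2 ∧ Nat.gcd (Nat.gcd x y) z = 1 ∧
        n = 2 ^ k * z) : ∀ d, d ∣ n → d % 4 ≠ 3 := by
  obtain ⟨k, x, y, z, hxyz, hgcd, hnz⟩ := h
  intro d hdn hd4
  -- gcd x y = 1
  have hz0 : 0 < z := by
    rcases Nat.eq_zero_or_pos z with h | h
    · subst h; simp at hnz; omega
    · exact h
  have hgxy : Nat.gcd x y = 1 := by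
    set g := Nat.gcd x y with hg
    have hgx : g ∣ x := Nat.gcd_dvd_left x y
    have hgy : g ∣ y := Nat.gcd_dvd_right x y
    have hgz2 : g^2 ∣ z^2 := by
      rw [← hxyz]
      exact dvd_add (pow_dvd_pow_of_dvd hgx 2) (pow_dvd_pow_of_dvd hgy 2)
    have hgz : g ∣ z := (Nat.pow_dvd_pow_iff two_ne_zero).mp hgz2
    have hgd1 : g ∣ Nat.gcd (Nat.gcd x y) z := Nat.dvd_gcd (dvd_refl g) hgz
    rw [hgcd] at hgd1
    exact Nat.dvd_one.mp hgd1
  -- d is odd hence divides z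
  have hco2 : Nat.Coprime d 2 := by
    have h2 : Nat.gcd d 2 ∣ 2 := Nat.gcd_dvd_right d 2
    have h1 : Nat.gcd d 2 ∣ d := Nat.gcd_dvd_left d 2
    rcases (Nat.dvd_prime Nat.prime_two).mp h2 with h | h
    · exact h
    · exfalso
      rw [h] at h1
      omega
  have hdz : d ∣ z := by
    refine Nat.Coprime.dvd_of_dvd_mul_left (Nat.Coprime.pow_right k hco2) ?_
    rw [← hnz]
    exact hdn
  obtain ⟨p, hp, hpd, hp4⟩ := exists_prime_3mod4 d hd4
  haveI : Fact p.Prime := ⟨hp⟩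
  have hpz : p ∣ z := hpd.trans hdz
  have hp2 := hp.two_le
  have hpx : ¬ p ∣ x := by
    intro hpx
    have hpxy : p ∣ x^2 + y^2 := by
      rw [hxyz]
      exact dvd_pow hpz two_ne_zero
    have hpy2 : p ∣ y^2 := by
      have h' := Nat.dvd_sub hpxy (dvd_pow hpx two_ne_zero)
      simpa using h'
    have hpy := hp.dvd_of_dvd_pow hpy2
    have hpg : p ∣ Nat.gcd x y := Nat.dvd_gcd hpx hpy
    rw [hgxy] at hpg
    have := Nat.dvd_one.mp hpg
    omega
  have hcast : ((x:ZMod p))^2 + ((y:ZMod p))^2 = 0 := by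
    have h1 : ((x^2 + y^2 : ℕ) : ZMod p) = ((z^2:ℕ) : ZMod p) := by rw [hxyz]
    have hz0' : ((z : ZMod p)) = 0 := (ZMod.natCast_eq_zero_iff z p).mpr hpz
    push_cast at h1
    rw [hz0'] at h1
    simpa using h1
  have hxne : (x : ZMod p) ≠ 0 := fun h => hpx ((ZMod.natCast_eq_zero_iff x p).mp h)
  have hsq : IsSquare (-1 : ZMod p) := by
    refine ⟨(y : ZMod p) * ((x : ZMod p))⁻¹, ?_⟩
    have hx2 : ((x:ZMod p))^2 ≠ 0 := pow_ne_zero 2 hxne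
    field_simp
    linear_combination -hcast
  have := ZMod.exists_sq_eq_neg_one_iff.mp hsq
  exact this hp4


theorem stmt12 (n : ℕ) (hn : 0 < n) :
    (∀ i : ℕ, i ≤ n → 0 ≤ (gammaPlus n i : ℤ) - (gammaMinus n i : ℤ)) ↔
      (∃ (k x y z : ℕ), x ^ 2 + y ^ 2 = z ^ 2 ∧ Nat.gcd (Nat.gcd x y) z = 1 ∧
        n = 2 ^ k * z) := by
  constructor
  · intro hL
    have hQ : ∀ d, d ∣ n → d % 4 ≠ 3 := by
      intro d hdn hd4
      obtain ⟨i, hin, k', hk'd, hk'0, hk'eq⟩ := witness3 hn hdn hd4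
      have hplus : gammaPlus n i = 0 := by
        simp only [gammaPlus, Finset.card_eq_zero, Finset.filter_eq_empty_iff]
        intro k hk hkeq
        exact lemB_s12 hn (Nat.pos_of_mem_divisors hk) hk'0 hkeq hk'eq
      have hminus : 0 < gammaMinus n i := by
        rw [gammaMinus, Finset.card_pos]
        refine ⟨k', Finset.mem_filter.mpr ⟨Nat.mem_divisors.mpr ⟨hk'd, by omega⟩, hk'eq⟩⟩
      have hLi := hL i hin
      rw [hplus] at hLi
      omega
    obtain ⟨k, z, hz2, hnkz⟩ := odd_part n hn
    have hz0 : 0 < z := by omega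
    obtain ⟨x, y, hxy, hg⟩ := hyp_exists z hz0 hz2
      (fun d hd => hQ d (hd.trans ⟨2^k, by rw [hnkz]; ring⟩))
    exact ⟨k, x, y, z, hxy, by rw [hg]; exact Nat.gcd_one_left z, hnkz⟩
  · intro hR i hi
    have hQ := rhs_to_Q hn hR
    have hminus : gammaMinus n i = 0 := by
      simp only [gammaMinus, Finset.card_eq_zero, Finset.filter_eq_empty_iff]
      intro kk hk hkeq
      obtain ⟨d, hd, hd4⟩ := lemA hn (Nat.pos_of_mem_divisors hk) ((Nat.mem_divisors.mp hk).1) hkeq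
      exact hQ d hd hd4
    rw [hminus]
    simp
end
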